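/- (Gallai's theorem) For any finite graph G with n vertices and no isolated vertices, the maximum matching number α'(G) and the minimum edge cover number β'(G) satisfy α'(G) + β'(G) = n. -/

import Mathlib

/-- `M` is a matching in `G`: a set of edges of `G` that are pairwise
vertex-disjoint. -/
def IsMatchingSet {V : Type*} (G : SimpleGraph V) (M : Finset (Sym2 V)) : Prop :=
  ↑M ⊆ G.edgeSet ∧ ∀ e ∈ M, ∀ f ∈ M, e ≠ f → ∀ v : V, ¬(v ∈ e ∧ v ∈ f)

/-- `C` is an edge cover of `G`: a set of edges of `G` such that every vertex
is incident to at least one edge of `C`. -/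
def IsEdgeCover {V : Type*} (G : SimpleGraph V) (C : Finset (Sym2 V)) : Prop :=
  ↑C ⊆ G.edgeSet ∧ ∀ v : V, ∃ e ∈ C, v ∈ e

/-- The endpoints of an edge, as a finset. -/
def everts {V : Type*} [DecidableEq V] (e : Sym2 V) : Finset V :=
  Sym2.lift ⟨fun a b => {a, b}, fun a b => Finset.pair_comm a b⟩ e

lemma mem_everts {V : Type*} [DecidableEq V] {e : Sym2 V} {v : V} :
    v ∈ everts e ↔ v ∈ e := by
  induction e using Sym2.ind with
  | _ a b => simp [everts, Sym2.mem_iff]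

lemma card_everts {V : Type*} [DecidableEq V] {e : Sym2 V} (h : ¬e.IsDiag) :
    (everts e).card = 2 := by
  induction e using Sym2.ind with
  | _ a b =>
    rw [Sym2.mk_isDiag_iff] at h
    simp [everts, Finset.card_insert_of_notMem, h]

/-- The number of vertices covered by a matching is twice its size. -/
lemma covered_card {V : Type*} [DecidableEq V] (G : SimpleGraph V)
    (M : Finset (Sym2 V)) (hM : IsMatchingSet G M) :
    (M.biUnion everts).card = 2 * M.card := by
  rw [Finset.card_biUnion]
  · rw [Finset.sum_congr rfl (fun e he => card_everts (G.not_isDiag_of_mem_edgeSet (hM.1 he)))]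
    simp [Finset.sum_const, mul_comm]
  · intro e he f hf hef
    rw [Function.onFun, Finset.disjoint_left]
    intro v hv hv'
    exact hM.2 e he f hf hef v ⟨mem_everts.mp hv, mem_everts.mp hv'⟩

theorem gallai {V : Type*} [Fintype V] [DecidableEq V] (G : SimpleGraph V)
    (hiso : ∀ v : V, ∃ u : V, G.Adj v u) :
    sSup {k : ℕ | ∃ M : Finset (Sym2 V), IsMatchingSet G M ∧ M.card = k} +
      sInf {k : ℕ | ∃ C : Finset (Sym2 V), IsEdgeCover G C ∧ C.card = k} =
      Fintype.card V := by
  classical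
  set n := Fintype.card V with hn
  set SM := {k : ℕ | ∃ M : Finset (Sym2 V), IsMatchingSet G M ∧ M.card = k} with hSM
  set SC := {k : ℕ | ∃ C : Finset (Sym2 V), IsEdgeCover G C ∧ C.card = k} with hSC
  -- SM is nonempty and bounded above
  have hSMne : (0 : ℕ) ∈ SM := ⟨∅, ⟨by simp, by simp⟩, rfl⟩
  have hSMbdd : BddAbove SM := by
    refine ⟨Fintype.card (Sym2 V), ?_⟩
    rintro k ⟨M, _, rfl⟩
    exact Finset.card_le_univ M
  -- SC is nonempty
  have hSCne : ∃ k, k ∈ SC := by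
    refine ⟨G.edgeFinset.card, G.edgeFinset, ⟨?_, ?_⟩, rfl⟩
    · simp [SimpleGraph.coe_edgeFinset]
    · intro v
      obtain ⟨u, hu⟩ := hiso v
      exact ⟨s(v, u), by simpa using hu, by simp⟩
  set α := sSup SM with hα
  set β := sInf SC with hβ
  obtain ⟨M, hM, hMcard⟩ : α ∈ SM := Nat.sSup_mem ⟨0, hSMne⟩ hSMbdd
  obtain ⟨C, hC, hCcard⟩ : β ∈ SC := Nat.sInf_mem hSCne
  have hMmax : ∀ M' : Finset (Sym2 V), IsMatchingSet G M' → M'.card ≤ α :=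
    fun M' h => le_csSup hSMbdd ⟨M', h, rfl⟩
  have hCmin : ∀ C' : Finset (Sym2 V), IsEdgeCover G C' → β ≤ C'.card :=
    fun C' h => Nat.sInf_le ⟨C', h, rfl⟩
  -- Step 1: α + β ≤ n
  have h1 : α + β ≤ n := by
    set T := M.biUnion everts with hT
    have hTcard : T.card = 2 * α := by rw [hT, covered_card G M hM, hMcard]
    have hTle : 2 * α ≤ n := hTcard ▸ Finset.card_le_univ T
    set U := Finset.univ \ T with hU
    have hUcard : U.card = n - 2 * α := by
      rw [hU, Finset.card_sdiff_of_subset (Finset.subset_univ T), hTcard, Finset.card_univ]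
    set C' := M ∪ U.image (fun v => s(v, Classical.choose (hiso v))) with hC'
    have hcov : IsEdgeCover G C' := by
      constructor
      · intro e he
        rw [hC', Finset.coe_union] at he
        rcases he with he | he
        · exact hM.1 he
        · simp only [Finset.coe_image, Set.mem_image] at he
          obtain ⟨v, _, rfl⟩ := he
          exact (SimpleGraph.mem_edgeSet G).mpr (Classical.choose_spec (hiso v))
      · intro v
        by_cases hv : v ∈ T
        · obtain ⟨e, he, hve⟩ := Finset.mem_biUnion.mp hv
          exact ⟨e, Finset.mem_union_left _ he, mem_everts.mp hve⟩
        · refine ⟨s(v, Classical.choose (hiso v)), ?_, by simp⟩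
          refine Finset.mem_union_right _ (Finset.mem_image_of_mem _ ?_)
          rw [hU]; simp [hv]
    have hc' : C'.card ≤ α + (n - 2 * α) := by
      calc C'.card ≤ M.card + (U.image _).card := Finset.card_union_le _ _
        _ ≤ α + (n - 2 * α) := by
            rw [hMcard]
            exact Nat.add_le_add_left ((Finset.card_image_le).trans_eq hUcard) _
    have := (hCmin C' hcov).trans hc'
    omega
  -- Step 2: n ≤ α + β
  have h2 : n ≤ α + β := by
    -- take a maximum-cardinality matching inside C
    have hex : ((C.powerset).filter (fun M' => IsMatchingSet G M')).Nonempty :=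
      ⟨∅, by simp [IsMatchingSet]⟩
    obtain ⟨N, hNmem, hNmax⟩ := Finset.exists_max_image _ Finset.card hex
    simp only [Finset.mem_filter, Finset.mem_powerset] at hNmem
    obtain ⟨hNC, hNmatch⟩ := hNmem
    set T := N.biUnion everts with hT
    have hTcard : T.card = 2 * N.card := covered_card G N hNmatch
    set U := Finset.univ \ T with hU
    have hUcard : U.card = n - T.card := by
      rw [hU, Finset.card_sdiff_of_subset (Finset.subset_univ T), Finset.card_univ]
    -- for v uncovered, choose an edge of C containing v
    have hpick : ∀ v : V, ∃ e ∈ C, v ∈ e := hC.2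
    choose f hf hvf using hpick
    -- f maps U injectively into C \ N
    have hfnotN : ∀ v ∈ U, f v ∉ N := by
      intro v hv hfN
      rw [hU, Finset.mem_sdiff] at hv
      exact hv.2 (Finset.mem_biUnion.mpr ⟨f v, hfN, mem_everts.mpr (hvf v)⟩)
    have hinj : Set.InjOn f U := by
      intro v hv w hw hfvw
      by_contra hne
      -- f v contains both v and w, so f v = s(v,w); then N ∪ {f v} is a bigger matching in C
      have hvw : w ∈ f v := hfvw ▸ hvf w
      have hfe : f v = s(v, w) := by
        have hdv := hvf v
        obtain ⟨a, b, hab⟩ : ∃ a b, f v = s(a, b) := by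
          induction (f v) using Sym2.ind with
          | _ a b => exact ⟨a, b, rfl⟩
        have hnd : a ≠ b := by
          intro h
          exact G.not_isDiag_of_mem_edgeSet (hC.1 (hf v))
            (by rw [hab, Sym2.mk_isDiag_iff]; exact h)
        rw [hab] at hdv hvw ⊢
        rw [Sym2.mem_iff] at hdv hvw
        rw [Sym2.eq_iff]
        rcases hdv with rfl | rfl <;> rcases hvw with rfl | rfl <;> tauto
      -- endpoints of f v are uncovered
      have hunc : ∀ x : V, x ∈ f v → ∀ e ∈ N, x ∉ e := by
        intro x hx e he hxe
        rw [hfe, Sym2.mem_iff] at hx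
        have : x ∈ T := Finset.mem_biUnion.mpr ⟨e, he, mem_everts.mpr hxe⟩
        rcases hx with rfl | rfl
        · exact (Finset.mem_sdiff.mp hv).2 this
        · exact (Finset.mem_sdiff.mp hw).2 this
      have hN' : IsMatchingSet G (insert (f v) N) := by
        constructor
        · intro e he
          rw [Finset.coe_insert, Set.mem_insert_iff] at he
          rcases he with rfl | he
          · exact hC.1 (hf v)
          · exact hNmatch.1 he
        · intro e he g hg hne' x hx
          rw [Finset.mem_insert] at he hg
          rcases he with rfl | he <;> rcases hg with rfl | hg
          · exact hne' rfl
          · exact hunc x hx.1 g hg hx.2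
          · exact hunc x hx.2 e he hx.1
          · exact hNmatch.2 e he g hg hne' x hx
      have hsub : insert (f v) N ⊆ C := by
        intro e he
        rw [Finset.mem_insert] at he
        rcases he with rfl | he
        · exact hf v
        · exact hNC he
      have := hNmax (insert (f v) N) (by simp [Finset.mem_filter, Finset.mem_powerset, hsub, hN'])
      rw [Finset.card_insert_of_notMem (hfnotN v hv)] at this
      omega
    have hUle : U.card ≤ (C \ N).card := by
      apply Finset.card_le_card_of_injOn f
      · intro v hv
        exact Finset.mem_sdiff.mpr ⟨hf v, hfnotN v hv⟩
      · exact fun a ha b hb => hinj (by exact_mod_cast ha) (by exact_mod_cast hb)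
    have hsd : (C \ N).card = C.card - N.card := Finset.card_sdiff_of_subset hNC
    have hNle : N.card ≤ C.card := Finset.card_le_card hNC
    have hNα : N.card ≤ α := hMmax N hNmatch
    have hTle : T.card ≤ n := Finset.card_le_univ T
    rw [hsd, hCcard] at hUle
    omega
  omega
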